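/- Fix k ≥ 0, block sizes n_1,…,n_{k+1}, nonempty sets A_m ⊆ {1,…,n_m}, targets t_m ∈ A_m, and staircases C_m = ∏_{i ∈ A_m\{t_m}} CNOT_{i→t_m} acting on the m-th block. Let W = (C_1⊗⋯⊗C_{k+1})⁻¹ · G · (C_1⊗⋯⊗C_{k+1}), where G is the gate C^kZ(θ) applied to the qubits t_1,…,t_{k+1} (one in each block). Then for all computational basis states, W(|x^{(1)}⟩⊗⋯⊗|x^{(k+1)}⟩) = e^{iθ·∏_{m=1}^{k+1} parity_{A_m}(x^{(m)})} |x^{(1)}⟩⊗⋯⊗|x^{(k+1)}⟩. Consequently, if each block carries a 2-dimensional codespace with orthonormal basis {|0̄⟩_m, |1̄⟩_m} satisfying (∏_{i∈A_m} Z_i)|b̄⟩_m = (−1)^b |b̄⟩_m, then W implements the logical C^kZ(θ) gate: W(|b̄_1⟩⊗⋯⊗|b̄_{k+1}⟩) = e^{iθ·b_1⋯b_{k+1}} |b̄_1⟩⊗⋯⊗|b̄_{k+1}⟩, using one physical C^kZ(θ) gate and 2(|A_m|−1) CNOT gates on each block. -/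

import Mathlib

open scoped Classical
open Matrix

noncomputable section

/-- basis vector `|x⟩` -/
def bvec {α : Type*} (x : α) : α → ℂ := fun y => if y = x then 1 else 0

/-- inner product `⟪v, w⟫` on basis-indexed amplitude vectors -/
def qInner {α : Type*} [Fintype α] (v w : α → ℂ) : ℂ :=
  ∑ x, (starRingEnd ℂ) (v x) * w x

/-- Pauli X -/
def σx : Matrix Bool Bool ℂ := Matrix.of fun a b => if a = !b then 1 else 0
/-- Pauli Y -/
def σy : Matrix Bool Bool ℂ :=
  Matrix.of fun a b => if a = !b then (if a then Complex.I else -Complex.I) else 0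
/-- Pauli Z -/
def σz : Matrix Bool Bool ℂ := Matrix.of fun a b => if a = b then (if a then -1 else 1) else 0
/-- Hadamard -/
def Hgate : Matrix Bool Bool ℂ :=
  Matrix.of fun a b => (if a && b then -1 else 1) / (Real.sqrt 2 : ℂ)
/-- phase gate S = diag(1, i) -/
def Sgate : Matrix Bool Bool ℂ :=
  Matrix.of fun a b => if a = b then (if a then Complex.I else 1) else 0
/-- Z(θ) = diag(1, e^{iθ}) -/
def Zrot (θ : ℝ) : Matrix Bool Bool ℂ :=
  Matrix.of fun a b => if a = b then (if a then Complex.exp (θ * Complex.I) else 1) else 0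

/-- tensor product over `ι` of single-qubit matrices -/
def tensMat {ι : Type*} [Fintype ι] (P : ι → Matrix Bool Bool ℂ) :
    Matrix (ι → Bool) (ι → Bool) ℂ :=
  Matrix.of fun x y => ∏ i, P i (x i) (y i)

/-- CNOT with control `i`, target `t`, in one register -/
def CNOT {ι : Type*} (i t : ι) : Matrix (ι → Bool) (ι → Bool) ℂ :=
  Matrix.of fun y x => if y = Function.update x t (xor (x i) (x t)) then 1 else 0

/-- Z(θ) applied to qubit `t` -/
def ZrotAt {ι : Type*} (θ : ℝ) (t : ι) : Matrix (ι → Bool) (ι → Bool) ℂ :=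
  Matrix.of fun y x => if y = x then (if x t then Complex.exp (θ * Complex.I) else 1) else 0

/-- `parityOdd A x` : the bits of `x` indexed by `A` have odd parity -/
def parityOdd {ι : Type*} (A : Finset ι) (x : ι → Bool) : Prop :=
  (A.filter fun i => x i = true).card % 2 = 1

/-- `∏_{i ∈ A} Z_i` -/
def ZA {ι : Type*} [Fintype ι] (A : Finset ι) : Matrix (ι → Bool) (ι → Bool) ℂ :=
  tensMat fun i => if i ∈ A then σz else 1

/-- `∏_{j ∈ B} X_j` -/
def XB {ι : Type*} [Fintype ι] (B : Finset ι) : Matrix (ι → Bool) (ι → Bool) ℂ :=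
  tensMat fun j => if j ∈ B then σx else 1

/-- the joint `+1`-eigenspace of a set of matrices, as a submodule -/
def jointFixed {ι : Type*} [Fintype ι] (S : Set (Matrix (ι → Bool) (ι → Bool) ℂ)) :
    Submodule ℂ ((ι → Bool) → ℂ) where
  carrier := {v | ∀ g ∈ S, g.mulVec v = v}
  add_mem' := by
    intro a b ha hb g hg
    rw [Matrix.mulVec_add, ha g hg, hb g hg]
  zero_mem' := by
    intro g hg
    rw [Matrix.mulVec_zero]
  smul_mem' := by
    intro c a ha g hg
    rw [Matrix.mulVec_smul, ha g hg]

/-- a matrix on qubits `ι` acts only on the qubits in `A` (identity elsewhere) -/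
def ActsOnlyOn {ι : Type*} (M : Matrix (ι → Bool) (ι → Bool) ℂ) (A : Set ι) : Prop :=
  ∃ W : Matrix (A → Bool) (A → Bool) ℂ,
    ∀ x y, M x y =
      if ∀ i, i ∉ A → x i = y i then W (fun i => x i.val) (fun i => y i.val) else 0

/-- an `ι`-qubit Pauli operator `i^c · ⨂_i P_i` -/
structure PauliOp (ι : Type*) [Fintype ι] where
  phase : Fin 4
  fac : ι → Matrix Bool Bool ℂ
  isPauli : ∀ i, fac i = 1 ∨ fac i = σx ∨ fac i = σy ∨ fac i = σz

def PauliOp.toMatrix {ι : Type*} [Fintype ι] (p : PauliOp ι) :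
    Matrix (ι → Bool) (ι → Bool) ℂ :=
  Complex.I ^ (p.phase : ℕ) • tensMat p.fac

/-- number of non-identity tensor factors -/
def PauliOp.weight {ι : Type*} [Fintype ι] (p : PauliOp ι) : ℕ :=
  Set.ncard {i | p.fac i ≠ 1}

/-- tensor product of states of two registers -/
def tens2 {ι κ : Type*} (v : (ι → Bool) → ℂ) (w : (κ → Bool) → ℂ) :
    (ι → Bool) × (κ → Bool) → ℂ :=
  fun p => v p.1 * w p.2

/-- CNOT with control qubit `i` of the first register and target qubit `j` of the second -/
def CNOT2 {ι κ : Type*} (i : ι) (j : κ) :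
    Matrix ((ι → Bool) × (κ → Bool)) ((ι → Bool) × (κ → Bool)) ℂ :=
  Matrix.of fun y x =>
    if y = (x.1, Function.update x.2 j (xor (x.1 i) (x.2 j))) then 1 else 0

-- Steane code
def steaneGen : Fin 3 → (Fin 7 → Bool) :=
  ![![false, false, false, true, true, true, true],
    ![false, true, true, false, false, true, true],
    ![true, false, true, false, true, false, true]]

/-- the binary [7,3] code generated by 0001111, 0110011, 1010101 -/
def hammingC : Set (Fin 7 → Bool) :=
  {c | ∃ a b e : Bool,
    c = fun i => xor (a && steaneGen 0 i) (xor (b && steaneGen 1 i) (e && steaneGen 2 i))}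

/-- Steane logical basis: `steane false = |0̄⟩`, `steane true = |1̄⟩ = X^{⊗7}|0̄⟩` -/
def steane : Bool → ((Fin 7 → Bool) → ℂ) := fun b =>
  if b then (tensMat fun _ => σx).mulVec (fun y => if y ∈ hammingC then ((Real.sqrt 8 : ℂ))⁻¹ else 0)
  else fun y => if y ∈ hammingC then ((Real.sqrt 8 : ℂ))⁻¹ else 0

-- 5-qubit code
def fiveStab : Fin 4 → Matrix (Fin 5 → Bool) (Fin 5 → Bool) ℂ :=
  ![tensMat ![σx, σz, σz, σx, 1],
    tensMat ![1, σx, σz, σz, σx],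
    tensMat ![σx, 1, σx, σz, σz],
    tensMat ![σz, σx, 1, σx, σz]]

def fiveCodespace : Submodule ℂ ((Fin 5 → Bool) → ℂ) :=
  jointFixed (Set.range fiveStab)

/-- a choice of logical basis for the 5-qubit code -/
def fiveLogical (v : Bool → ((Fin 5 → Bool) → ℂ)) : Prop :=
  (∀ b, v b ∈ fiveCodespace) ∧ (∀ b, qInner (v b) (v b) = 1) ∧
  (tensMat fun _ : Fin 5 => σz).mulVec (v false) = v false ∧
  (tensMat fun _ : Fin 5 => σz).mulVec (v true) = -(v true) ∧
  (tensMat fun _ : Fin 5 => σx).mulVec (v false) = v true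

-- [[15,1,3]] Reed–Muller code
def rmBit (i : Fin 15) (j : Fin 4) : Bool := Nat.testBit (i.val + 1) j.val

def rmXstab (j : Fin 4) : Matrix (Fin 15 → Bool) (Fin 15 → Bool) ℂ :=
  tensMat fun i => if rmBit i j then σx else 1

def rmZstab (j k : Fin 4) : Matrix (Fin 15 → Bool) (Fin 15 → Bool) ℂ :=
  tensMat fun i => if rmBit i j && rmBit i k then σz else 1

def rmCodespace : Submodule ℂ ((Fin 15 → Bool) → ℂ) :=
  jointFixed ({M | ∃ j, M = rmXstab j} ∪ {M | ∃ j k, j < k ∧ M = rmZstab j k})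

/-- a choice of logical basis for the [[15,1,3]] Reed–Muller code -/
def rmLogical (w : Bool → ((Fin 15 → Bool) → ℂ)) : Prop :=
  (∀ b, w b ∈ rmCodespace) ∧ (∀ b, qInner (w b) (w b) = 1) ∧
  (tensMat fun _ : Fin 15 => σz).mulVec (w false) = w false ∧
  (tensMat fun _ : Fin 15 => σz).mulVec (w true) = -(w true) ∧
  (tensMat fun _ : Fin 15 => σx).mulVec (w false) = w true


/-- CNOT with control `i` and target `t` inside block `m` of a multi-block register. -/
def CNOTblk {k : ℕ} {n : Fin (k + 1) → ℕ} (m : Fin (k + 1)) (i t : Fin (n m)) :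
    Matrix (∀ m, Fin (n m) → Bool) (∀ m, Fin (n m) → Bool) ℂ :=
  Matrix.of fun y x =>
    if y = Function.update x m (Function.update (x m) t (xor (x m i) (x m t))) then 1 else 0

/-- the `(k+1)`-qubit gate `C^kZ(θ)` applied to the qubits `t 0, …, t k` (one per block). -/
def ckzAt {k : ℕ} {n : Fin (k + 1) → ℕ} (θ : ℝ) (t : ∀ m, Fin (n m)) :
    Matrix (∀ m, Fin (n m) → Bool) (∀ m, Fin (n m) → Bool) ℂ :=
  Matrix.of fun y x =>
    if y = x then (if ∀ m, x m (t m) = true then Complex.exp (θ * Complex.I) else 1) else 0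

/-- the tensor product `C_1 ⊗ ⋯ ⊗ C_{k+1}` of the per-block staircases of CNOTs
(each block `m` enumerated by the list `l m`). -/
def staircases {k : ℕ} {n : Fin (k + 1) → ℕ} (t : ∀ m, Fin (n m))
    (l : ∀ m, List (Fin (n m))) :
    Matrix (∀ m, Fin (n m) → Bool) (∀ m, Fin (n m) → Bool) ℂ :=
  ((List.finRange (k + 1)).map fun m => ((l m).map fun i => CNOTblk m i (t m)).prod).prod

/-- tensor product of one state per block. -/
def blockTens {k : ℕ} {n : Fin (k + 1) → ℕ}
    (v : ∀ m : Fin (k + 1), (Fin (n m) → Bool) → ℂ) : (∀ m, Fin (n m) → Bool) → ℂ :=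
  fun x => ∏ m, v m (x m)

namespace Stmt2Aux

variable {α : Type*} [Fintype α] [DecidableEq α]

/-- permutation-style matrix of a map `f` -/
def permMat (f : α → α) : Matrix α α ℂ := Matrix.of fun y x => if y = f x then 1 else 0

lemma permMat_mul (f g : α → α) : permMat f * permMat g = permMat (f ∘ g) := by
  ext y x
  simp only [permMat, Matrix.mul_apply, Matrix.of_apply, Function.comp_apply]
  rw [Finset.sum_eq_single (g x)]
  · simp
  · intro z _ hz; simp [hz]
  · simp

lemma permMat_id : permMat (id : α → α) = 1 := by
  ext y x; simp [permMat, Matrix.one_apply]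

lemma permMat_prod (L : List (α → α)) :
    (L.map permMat).prod = permMat (L.foldr (· ∘ ·) id) := by
  induction L with
  | nil => simp [permMat_id]
  | cons f L ih => simp [ih, permMat_mul]

lemma permMat_mulVec_bvec (f : α → α) (x : α) :
    (permMat f).mulVec (bvec x) = bvec (f x) := by
  funext y
  simp only [permMat, Matrix.mulVec, dotProduct, Matrix.of_apply, bvec]
  rw [Finset.sum_eq_single x]
  · simp
  · intro z _ hz; simp [hz]
  · simp

lemma diag_mulVec (M : Matrix α α ℂ) (d : α → ℂ)
    (h : ∀ y x, M y x = if y = x then d x else 0) (u : α → ℂ) :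
    M.mulVec u = fun y => d y * u y := by
  funext y
  simp only [Matrix.mulVec, dotProduct, h]
  rw [Finset.sum_eq_single y]
  · simp
  · intro z _ hz; simp [Ne.symm hz]
  · simp

lemma foldr_xor_init {β : Type*} (L : List β) (w : β → Bool) (a : Bool) :
    L.foldr (fun i b => xor (w i) b) a =
      xor (L.foldr (fun i b => xor (w i) b) false) a := by
  induction L with
  | nil => simp
  | cons i L ih => simp [ih, Bool.xor_assoc]

lemma foldr_xor_congr {β : Type*} (L : List β) (w w' : β → Bool) (a : Bool)
    (h : ∀ i ∈ L, w i = w' i) :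
    L.foldr (fun i b => xor (w i) b) a = L.foldr (fun i b => xor (w' i) b) a := by
  induction L with
  | nil => rfl
  | cons i L ih =>
    simp only [List.foldr_cons]
    rw [h i (by simp), ih (fun j hj => h j (by simp [hj]))]

lemma card_filter_toFinset_mod_two {β : Type*} [DecidableEq β] (L : List β)
    (hL : L.Nodup) (w : β → Bool) :
    (((L.toFinset.filter fun i => w i = true).card) % 2 = 1) ↔
      L.foldr (fun i b => xor (w i) b) false = true := by
  induction L with
  | nil => simp
  | cons i L ih =>
    rcases List.nodup_cons.mp hL with ⟨hi, hL'⟩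
    have hins : i ∉ L.toFinset.filter (fun i => w i = true) := by
      simp only [Finset.mem_filter, List.mem_toFinset]
      exact fun h => hi h.1
    rw [List.toFinset_cons, Finset.filter_insert]
    have hIH := ih hL'
    cases hwi : w i with
    | false => simpa [hwi] using hIH
    | true =>
      rw [if_pos (by simp [hwi]), Finset.card_insert_of_notMem hins]
      simp only [List.foldr_cons, hwi, Bool.true_xor, Bool.not_eq_true']
      rw [← Bool.not_eq_true, ← hIH]
      omega

section Blocks

variable {k : ℕ} {n : Fin (k + 1) → ℕ}

/-- the map implemented by `CNOTblk m i t'` on basis states -/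
def blkMap (m : Fin (k + 1)) (i t' : Fin (n m)) :
    (∀ m, Fin (n m) → Bool) → (∀ m, Fin (n m) → Bool) :=
  fun x => Function.update x m (Function.update (x m) t' (xor (x m i) (x m t')))

lemma CNOTblk_eq (m : Fin (k + 1)) (i t' : Fin (n m)) :
    CNOTblk m i t' = permMat (blkMap m i t') := by
  ext y x; simp [CNOTblk, permMat, blkMap]; congr

/-- per-block action of the staircase on block `m` -/
def Gblk (t : ∀ m, Fin (n m)) (l : ∀ m, List (Fin (n m))) (m : Fin (k + 1))
    (w : Fin (n m) → Bool) : Fin (n m) → Bool :=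
  Function.update w (t m) ((l m).foldr (fun i b => xor (w i) b) (w (t m)))

/-- staircase of block `m`, as a map on the whole register -/
def Fblk (t : ∀ m, Fin (n m)) (l : ∀ m, List (Fin (n m))) (m : Fin (k + 1)) :
    (∀ m, Fin (n m) → Bool) → (∀ m, Fin (n m) → Bool) :=
  fun x => Function.update x m (Gblk t l m (x m))

/-- total action of all staircases -/
def FtotMap (t : ∀ m, Fin (n m)) (l : ∀ m, List (Fin (n m))) :
    (∀ m, Fin (n m) → Bool) → (∀ m, Fin (n m) → Bool) :=
  fun x m => Gblk t l m (x m)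

lemma blk_fold (m : Fin (k + 1)) (t' : Fin (n m)) (L : List (Fin (n m)))
    (hL : ∀ i ∈ L, i ≠ t') (x : ∀ m, Fin (n m) → Bool) :
    (L.map fun i => blkMap m i t').foldr (· ∘ ·) id x =
      Function.update x m (Function.update (x m) t'
        (L.foldr (fun i b => xor (x m i) b) (x m t'))) := by
  induction L with
  | nil => simp [Function.update_eq_self]
  | cons i L ih =>
    have hit : i ≠ t' := hL i (by simp)
    simp only [List.map_cons, List.foldr_cons, Function.comp_apply]
    rw [ih (fun j hj => hL j (by simp [hj]))]
    simp [blkMap, Function.update_idem, Function.update_self,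
      Function.update_of_ne hit]

lemma blocks_fold (t : ∀ m, Fin (n m)) (l : ∀ m, List (Fin (n m)))
    (M : List (Fin (k + 1))) (hM : M.Nodup) (x : ∀ m, Fin (n m) → Bool) :
    (M.map (Fblk t l)).foldr (· ∘ ·) id x =
      fun m => if m ∈ M then Gblk t l m (x m) else x m := by
  induction M with
  | nil => simp
  | cons m M ih =>
    rcases List.nodup_cons.mp hM with ⟨hm, hM'⟩
    simp only [List.map_cons, List.foldr_cons, Function.comp_apply]
    rw [ih hM']
    funext m'
    by_cases hmm : m' = m
    · subst hmm
      simp [Fblk, Function.update_self, hm]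
    · simp [Fblk, Function.update_of_ne hmm, List.mem_cons, hmm]

lemma staircases_eq (t : ∀ m, Fin (n m)) (l : ∀ m, List (Fin (n m)))
    (hl : ∀ m, ∀ i ∈ l m, i ≠ t m) :
    staircases t l = permMat (FtotMap t l) := by
  have h1 : ∀ m : Fin (k + 1),
      ((l m).map fun i => CNOTblk m i (t m)).prod = permMat (Fblk t l m) := by
    intro m
    have h2 : ((l m).map fun i => CNOTblk m i (t m)) =
        (((l m).map fun i => blkMap m i (t m)).map permMat) := by
      rw [List.map_map]
      exact List.map_congr_left fun i _ => CNOTblk_eq m i (t m)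
    rw [h2, permMat_prod,
      show (List.foldr (· ∘ ·) id ((l m).map fun i => blkMap m i (t m))) = Fblk t l m from
        funext fun x => blk_fold m (t m) (l m) (hl m) x]
  have h3 : ((List.finRange (k + 1)).map fun m =>
      ((l m).map fun i => CNOTblk m i (t m)).prod) =
      ((List.finRange (k + 1)).map (Fblk t l)).map permMat := by
    rw [List.map_map]
    exact List.map_congr_left fun m _ => h1 m
  have h4 : (List.foldr (· ∘ ·) id ((List.finRange (k + 1)).map (Fblk t l))) = FtotMap t l := by
    funext x
    rw [blocks_fold t l _ (List.nodup_finRange _) x]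
    funext m
    simp [FtotMap, List.mem_finRange]
  rw [staircases, h3, permMat_prod, h4]

lemma Ftot_invol (t : ∀ m, Fin (n m)) (l : ∀ m, List (Fin (n m)))
    (hl : ∀ m, ∀ i ∈ l m, i ≠ t m) (x : ∀ m, Fin (n m) → Bool) :
    FtotMap t l (FtotMap t l x) = x := by
  funext m
  show Gblk t l m (Gblk t l m (x m)) = x m
  set w := x m with hw
  unfold Gblk
  set P := (l m).foldr (fun i b => xor (w i) b) (w (t m)) with hP
  have hread : ∀ i ∈ l m, (Function.update w (t m) P) i = w i :=
    fun i hi => Function.update_of_ne (hl m i hi) _ _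
  rw [foldr_xor_congr (l m) _ w _ hread, Function.update_self]
  have hPP : (l m).foldr (fun i b => xor (w i) b) P = w (t m) := by
    rw [foldr_xor_init, hP, foldr_xor_init (a := w (t m)), ← Bool.xor_assoc,
      Bool.xor_self, Bool.false_xor]
  rw [hPP, Function.update_idem, Function.update_eq_self]

end Blocks

end Stmt2Aux

open Stmt2Aux in
/-- `W = (C_1⊗⋯⊗C_{k+1})⁻¹ · C^kZ(θ)_{t_1…t_{k+1}} · (C_1⊗⋯⊗C_{k+1})`
multiplies each computational basis state by `e^{iθ·∏_m parity_{A_m}(x^{(m)})}`, and hence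
implements the logical `C^kZ(θ)` on blockwise codespaces whose basis vectors are
`∏_{i∈A_m} Z_i`-eigenvectors. -/
theorem stmt2 (k : ℕ) (n : Fin (k + 1) → ℕ)
    (A : ∀ m, Finset (Fin (n m))) (hA : ∀ m, (A m).Nonempty)
    (t : ∀ m, Fin (n m)) (ht : ∀ m, t m ∈ A m)
    (l : ∀ m, List (Fin (n m))) (hl : ∀ m, (l m).Nodup)
    (hlA : ∀ m, (l m).toFinset = (A m).erase (t m)) (θ : ℝ) :
    (∀ x : ∀ m, Fin (n m) → Bool,
      ((staircases t l)⁻¹ * ckzAt θ t * staircases t l).mulVec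
          (blockTens fun m => bvec (x m))
        = (if ∀ m, parityOdd (A m) (x m) then Complex.exp (θ * Complex.I) else 1) •
            blockTens fun m => bvec (x m)) ∧
    (∀ v : ∀ m : Fin (k + 1), Bool → ((Fin (n m) → Bool) → ℂ),
      (∀ m b, qInner (v m b) (v m b) = 1) →
      (∀ m, qInner (v m false) (v m true) = 0) →
      (∀ m b, (ZA (A m)).mulVec (v m b) = (if b then (-1 : ℂ) else 1) • v m b) →
      ∀ b : Fin (k + 1) → Bool,
        ((staircases t l)⁻¹ * ckzAt θ t * staircases t l).mulVec
            (blockTens fun m => v m (b m))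
          = (if ∀ m, b m = true then Complex.exp (θ * Complex.I) else 1) •
              blockTens fun m => v m (b m)) := by
  classical
  have hlt : ∀ m, ∀ i ∈ l m, i ≠ t m := by
    intro m i hi
    have h : i ∈ (A m).erase (t m) := by rw [← hlA m]; exact List.mem_toFinset.mpr hi
    exact Finset.ne_of_mem_erase h
  have hC : staircases t l = permMat (FtotMap t l) := staircases_eq t l hlt
  have hCsq : staircases t l * staircases t l = 1 := by
    rw [hC, permMat_mul,
      show FtotMap t l ∘ FtotMap t l = id from funext (Ftot_invol t l hlt), permMat_id]
  have hCinv : (staircases t l)⁻¹ = staircases t l := Matrix.inv_eq_right_inv hCsq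
  set c' : (∀ m, Fin (n m) → Bool) → ℂ := fun x =>
    if ∀ m, parityOdd (A m) (x m) then Complex.exp (θ * Complex.I) else 1 with hc'
  -- phase correctness
  have hphase : ∀ (x : ∀ m, Fin (n m) → Bool) (m : Fin (k + 1)),
      (FtotMap t l x m (t m) = true) ↔ parityOdd (A m) (x m) := by
    intro x m
    have hAm : A m = insert (t m) ((l m).toFinset) := by
      rw [hlA m, Finset.insert_erase (ht m)]
    have htl : t m ∉ (l m).toFinset := by
      rw [hlA m]; exact Finset.notMem_erase _ _
    have hcard := card_filter_toFinset_mod_two (l m) (hl m) (x m)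
    show (Function.update (x m) (t m)
        ((l m).foldr (fun i b => xor (x m i) b) (x m (t m)))) (t m) = true ↔ _
    rw [Function.update_self, foldr_xor_init]
    unfold parityOdd
    rw [hAm, Finset.filter_insert]
    set p := (l m).foldr (fun i b => xor (x m i) b) false with hp
    have htlf : t m ∉ (l m).toFinset.filter fun i => x m i = true := by
      simp only [Finset.mem_filter]; exact fun h => htl h.1
    cases hx : x m (t m) with
    | false =>
      rw [if_neg (by simp [hx])]
      simpa [Bool.xor_false] using hcard.symm
    | true =>
      rw [if_pos (by simp [hx]), Finset.card_insert_of_notMem htlf]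
      simp only [Bool.xor_true, Bool.not_eq_true']
      rw [← Bool.not_eq_true, ← hcard]
      omega
  -- ckz is diagonal
  have hckz : ∀ u, (ckzAt θ t).mulVec u = fun y =>
      (if ∀ m, y m (t m) = true then Complex.exp (θ * Complex.I) else 1) * u y :=
    diag_mulVec _ _ (fun y x => by by_cases h : y = x <;> simp [ckzAt, h])
  have hckzb : ∀ z, (ckzAt θ t).mulVec (bvec z) =
      (if ∀ m, z m (t m) = true then Complex.exp (θ * Complex.I) else 1) • bvec z := by
    intro z
    rw [hckz]
    funext y
    by_cases hyz : y = z
    · subst hyz; simp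
    · simp [bvec, hyz]
  -- action of W on basis vectors
  have hW1 : ∀ x : ∀ m, Fin (n m) → Bool,
      ((staircases t l)⁻¹ * ckzAt θ t * staircases t l).mulVec (bvec x) = c' x • bvec x := by
    intro x
    rw [hCinv, ← Matrix.mulVec_mulVec, ← Matrix.mulVec_mulVec, hC,
      permMat_mulVec_bvec, hckzb, Matrix.mulVec_smul, permMat_mulVec_bvec,
      Ftot_invol t l hlt]
    congr 1
    exact if_congr (forall_congr' fun m => hphase x m) rfl rfl
  have hBT : ∀ x : ∀ m, Fin (n m) → Bool, (blockTens fun m => bvec (x m)) = bvec x := by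
    intro x
    funext y
    simp only [blockTens, bvec]
    by_cases hyx : y = x
    · subst hyx; simp
    · obtain ⟨m, hm⟩ := Function.ne_iff.mp hyx
      rw [if_neg hyx]
      exact Finset.prod_eq_zero (Finset.mem_univ m) (by simp [hm])
  constructor
  · intro x
    rw [hBT x, hW1 x]
  · -- entries of W
    have hWent : ∀ y x, ((staircases t l)⁻¹ * ckzAt θ t * staircases t l) y x =
        if y = x then c' x else 0 := by
      intro y x
      have h := congrFun (hW1 x) y
      have hL : ((staircases t l)⁻¹ * ckzAt θ t * staircases t l).mulVec (bvec x) y =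
          ((staircases t l)⁻¹ * ckzAt θ t * staircases t l) y x := by
        simp only [Matrix.mulVec, dotProduct, bvec]
        rw [Finset.sum_eq_single x]
        · simp
        · intro z _ hz; simp [hz]
        · simp
      rw [hL] at h
      rw [h]
      simp only [Pi.smul_apply, bvec, smul_eq_mul]
      by_cases hyx : y = x <;> simp [hyx]
    have hWact : ∀ u, ((staircases t l)⁻¹ * ckzAt θ t * staircases t l).mulVec u =
        fun y => c' y * u y := diag_mulVec _ _ hWent
    intro v _ _ hZeig b
    -- support of eigenvectors of ZA
    have hZA : ∀ (m : Fin (k + 1)) (y x : Fin (n m) → Bool), ZA (A m) y x =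
        if y = x then (if parityOdd (A m) x then (-1 : ℂ) else 1) else 0 := by
      intro m y x
      by_cases hyx : y = x
      · subst hyx
        rw [if_pos rfl]
        unfold ZA tensMat
        rw [Matrix.of_apply]
        trans (∏ i : Fin (n m), if i ∈ A m then (if y i = true then (-1 : ℂ) else 1) else 1)
        · refine Finset.prod_congr rfl fun i _ => ?_
          by_cases hi : i ∈ A m <;> simp [hi, σz, Matrix.one_apply]
        rw [Finset.prod_ite_mem, Finset.univ_inter, Finset.prod_ite,
          Finset.prod_const, Finset.prod_const_one, mul_one]
        unfold parityOdd
        rcases Nat.even_or_odd ((A m).filter fun i => y i = true).card with he | ho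
        · rw [he.neg_one_pow, if_neg (by rw [Nat.even_iff] at he; omega)]
        · rw [ho.neg_one_pow, if_pos (Nat.odd_iff.mp ho)]
      · obtain ⟨i, hi⟩ := Function.ne_iff.mp hyx
        rw [if_neg hyx]
        refine Finset.prod_eq_zero (Finset.mem_univ i) ?_
        by_cases him : i ∈ A m <;> simp [him, σz, Matrix.one_apply, hi]
    have hsupp : ∀ (m : Fin (k + 1)) (bb : Bool) (w : Fin (n m) → Bool),
        v m bb w ≠ 0 → (parityOdd (A m) (w) ↔ bb = true) := by
      intro m bb w hv
      have h := congrFun (hZeig m bb) w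
      rw [diag_mulVec (ZA (A m)) _ (hZA m)] at h
      simp only [Pi.smul_apply, smul_eq_mul] at h
      have h2 : (if parityOdd (A m) w then (-1 : ℂ) else 1) = if bb then -1 else 1 :=
        mul_right_cancel₀ hv h
      by_cases hp : parityOdd (A m) w <;> cases bb
      · rw [if_pos hp] at h2
        simp only [Bool.false_eq_true, if_false] at h2
        norm_num at h2
      · simp [hp]
      · simp [hp]
      · rw [if_neg hp] at h2
        simp only [if_true] at h2
        norm_num at h2
    rw [hWact]
    funext y
    simp only [blockTens, Pi.smul_apply, smul_eq_mul]
    by_cases h0 : ∀ m, v m (b m) (y m) ≠ 0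
    · congr 1
      exact if_congr (forall_congr' fun m => hsupp m (b m) (y m) (h0 m)) rfl rfl
    · push_neg at h0
      obtain ⟨m, hm⟩ := h0
      rw [Finset.prod_eq_zero (Finset.mem_univ m) hm, mul_zero, mul_zero]

end
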